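/- Let i, k, p, q be nonnegative integers with 1 ≤ i ≤ k-1 and p(k-1) + q·i ≤ i(k-i). Then in the complete bipartite graph with parts S∩X of size i and S∩Y of size k-i, augmented by q extra vertices u_1, ..., u_q joined to all of S∩Y, there exist p pairwise edge-disjoint spanning trees of the complete bipartite graph K_{i,k-i} on S, together with q additional trees T_{p+1}, ..., T_{p+q}, where T_{p+m} has vertex set S ∪ {u_m} with u_m adjacent to all of S∩Y and each vertex of S∩X a leaf, such that all p+q trees are pairwise edge-disjoint. -/

import Mathlib

namespace SG13
open SimpleGraph Sum Set

def cf (a b j : ℕ) : ℕ := j * (b - 1) / a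
def sf (a b t x : ℕ) : ℕ := cf a b (x + t) + t
def cov (a b t x y : ℕ) : Prop :=
  ∃ cc, sf a b t x ≤ cc ∧ cc ≤ sf a b t (x + 1) ∧ y = cc % b
def lcol (a b p m x : ℕ) : ℕ := (cf a b (x + p) + p + m) % b

theorem cf_mono (a b : ℕ) {j j' : ℕ} (h : j ≤ j') : cf a b j ≤ cf a b j' :=
  Nat.div_le_div_right (Nat.mul_le_mul_right _ h)

theorem cf_add_a {a : ℕ} (b : ℕ) (ha : 0 < a) (j : ℕ) :
    cf a b (j + a) = cf a b j + (b - 1) := by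
  unfold cf
  rw [Nat.add_mul, Nat.add_mul_div_left _ _ ha]

theorem sf_mono (a b t : ℕ) {x x' : ℕ} (h : x ≤ x') : sf a b t x ≤ sf a b t x' :=
  Nat.add_le_add_right (cf_mono a b (Nat.add_le_add_right h t)) t

theorem sf_top {a : ℕ} (b : ℕ) (ha : 0 < a) (t : ℕ) :
    sf a b t a = sf a b t 0 + (b - 1) := by
  unfold sf
  rw [show a + t = t + a from by omega, cf_add_a b ha t,
    show (0 : ℕ) + t = t from by omega]
  omega

section
variable {a b p q : ℕ} (ha : 0 < a) (hb : 0 < b)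
  (hcnt : p * (a + b - 1) + q * a ≤ a * b)

include ha hb hcnt in
theorem hpq_le : p + q ≤ b := by
  have e1 : p * (a + b - 1) = p * (b - 1) + p * a := by
    rw [show a + b - 1 = (b - 1) + a from by omega, Nat.mul_add]
  have h1 : a * (p + q) ≤ a * b := by
    rw [Nat.mul_add]
    rw [e1] at hcnt
    have h2 : p * a = a * p := mul_comm _ _
    have h3 : q * a = a * q := mul_comm _ _
    have h7 : 0 ≤ p * (b - 1) := Nat.zero_le _
    linarith
  exact Nat.le_of_mul_le_mul_left h1 ha

include ha hb hcnt in
theorem keyH (x : ℕ) : cf a b (x + p) + p + q ≤ cf a b x + b := by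
  have hpq := hpq_le ha hb hcnt
  have e1 : p * (a + b - 1) = p * (b - 1) + p * a := by
    rw [show a + b - 1 = (b - 1) + a from by omega, Nat.mul_add]
  have h2 : p * (b - 1) ≤ a * (b - (p + q)) := by
    have e2 : a * b = a * (b - (p + q)) + a * (p + q) := by
      rw [← Nat.mul_add, Nat.sub_add_cancel hpq]
    have e3 : a * (p + q) = a * p + a * q := Nat.mul_add a p q
    have h4 : p * a = a * p := mul_comm _ _
    have h5 : q * a = a * q := mul_comm _ _
    rw [e1] at hcnt
    linarith
  have h6 : cf a b (x + p) ≤ cf a b x + (b - (p + q)) := by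
    unfold cf
    calc (x + p) * (b - 1) / a = (x * (b - 1) + p * (b - 1)) / a := by rw [Nat.add_mul]
      _ ≤ (x * (b - 1) + a * (b - (p + q))) / a :=
          Nat.div_le_div_right (Nat.add_le_add_left h2 _)
      _ = x * (b - 1) / a + (b - (p + q)) := Nat.add_mul_div_left _ _ ha
  omega

theorem mod_window {L u v : ℕ} (hb : 0 < b) (h1 : L ≤ u) (h2 : u < L + b)
    (h3 : L ≤ v) (h4 : v < L + b) (h5 : u % b = v % b) : u = v := by
  rcases le_total u v with h | h
  · have hd : b ∣ v - u := (Nat.modEq_iff_dvd' h).mp h5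
    have := Nat.eq_zero_of_dvd_of_lt hd
    omega
  · have hd : b ∣ u - v := (Nat.modEq_iff_dvd' h).mp h5.symm
    have := Nat.eq_zero_of_dvd_of_lt hd
    omega

theorem cov_bounds {t x y : ℕ} (ht : t < p) (h : cov a b t x y) :
    ∃ cc, cf a b x ≤ cc ∧ cc < cf a b (x + p) + p ∧
      sf a b t x ≤ cc ∧ cc ≤ sf a b t (x + 1) ∧ y = cc % b := by
  obtain ⟨cc, hc1, hc2, hc3⟩ := h
  refine ⟨cc, ?_, ?_, hc1, hc2, hc3⟩
  · calc cf a b x ≤ cf a b (x + t) := cf_mono a b (by omega)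
      _ ≤ cf a b (x + t) + t := Nat.le_add_right _ _
      _ ≤ cc := hc1
  · have e1 : cf a b (x + 1 + t) ≤ cf a b (x + p) := cf_mono a b (by omega)
    have e2 : sf a b t (x + 1) = cf a b (x + 1 + t) + t := rfl
    omega

include ha hb hcnt in
theorem disjAA {t t' x y : ℕ} (htt' : t < t') (ht' : t' < p)
    (h1 : cov a b t x y) (h2 : cov a b t' x y) : False := by
  obtain ⟨cc, hw1, hw2, hu1, hu2, hu3⟩ := cov_bounds (t := t) (p := p) (by omega) h1
  obtain ⟨cc', hw1', hw2', hu1', hu2', hu3'⟩ := cov_bounds (t := t') (p := p) ht' h2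
  have hK := keyH ha hb hcnt x
  have horder : cc < cc' := by
    have e1 : cf a b (x + 1 + t) ≤ cf a b (x + t') := cf_mono a b (by omega)
    have e2 : sf a b t (x + 1) = cf a b (x + 1 + t) + t := rfl
    have e3 : sf a b t' x = cf a b (x + t') + t' := rfl
    omega
  have : cc = cc' :=
    mod_window (b := b) (L := cf a b x) (u := cc) (v := cc') hb hw1 (by omega) hw1'
      (by omega) (by omega)
  omega

include ha hb hcnt in
theorem disjAB {t x y m : ℕ} (ht : t < p) (hm : m < q)
    (h1 : cov a b t x y) (h2 : y = lcol a b p m x) : False := by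
  obtain ⟨cc, hw1, hw2, hu1, hu2, hu3⟩ := cov_bounds (t := t) (p := p) ht h1
  have hK := keyH ha hb hcnt x
  have hmono : cf a b x ≤ cf a b (x + p) := cf_mono a b (by omega)
  have h5 : cc % b = (cf a b (x + p) + p + m) % b := by
    rw [← hu3, h2, lcol]
  have : cc = cf a b (x + p) + p + m :=
    mod_window (b := b) (L := cf a b x) (u := cc) (v := cf a b (x + p) + p + m) hb hw1
      (by omega) (by omega) (by omega) h5
  omega

include ha hb hcnt in
theorem disjBB {x m m' : ℕ} (hmm' : m ≠ m') (hm : m < q) (hm' : m' < q) :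
    lcol a b p m x ≠ lcol a b p m' x := by
  intro h
  have hK := keyH ha hb hcnt x
  have hpq := hpq_le ha hb hcnt
  unfold lcol at h
  have : cf a b (x + p) + p + m = cf a b (x + p) + p + m' :=
    mod_window (b := b) (L := cf a b (x + p) + p) hb (Nat.le_add_right _ _) (by omega)
      (Nat.le_add_right _ _) (by omega) h
  omega

include ha hb in
theorem cov_within {t x x' y : ℕ} (hx : x + 1 ≤ a) (hx' : x' < x)
    (h1 : cov a b t x y) (h2 : cov a b t x' y) : y = sf a b t x % b := by
  obtain ⟨cc, hu1, hu2, hu3⟩ := h1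
  obtain ⟨cc', hu1', hu2', hu3'⟩ := h2
  have htop := sf_top b ha t
  have m1 : sf a b t 0 ≤ sf a b t x' := sf_mono a b t (by omega)
  have m2 : sf a b t (x + 1) ≤ sf a b t a := sf_mono a b t (by omega)
  have m3 : sf a b t (x' + 1) ≤ sf a b t x := sf_mono a b t (by omega)
  have m4 : sf a b t 0 ≤ sf a b t x := sf_mono a b t (by omega)
  have heq : cc = cc' :=
    mod_window (b := b) (L := sf a b t 0) (u := cc) (v := cc') hb (by omega) (by omega)
      (by omega) (by omega) (by omega)
  have : cc = sf a b t x := by omega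
  rw [hu3, this]

include ha hb in
theorem cov_total (t : ℕ) {y : ℕ} (hy : y < b) : ∃ x, x < a ∧ cov a b t x y := by
  -- first find an integer in the window congruent to y
  obtain ⟨cc, hc1, hc2, hc3⟩ :
      ∃ cc, sf a b t 0 ≤ cc ∧ cc ≤ sf a b t 0 + (b - 1) ∧ y = cc % b := by
    set s0 := sf a b t 0 with hs0
    have hd := Nat.div_add_mod s0 b
    have hr : s0 % b < b := Nat.mod_lt _ hb
    by_cases hyr : s0 % b ≤ y
    · refine ⟨b * (s0 / b) + y, by omega, by omega, ?_⟩
      rw [Nat.mul_add_mod, Nat.mod_eq_of_lt hy]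
    · refine ⟨b * (s0 / b) + b + y, by omega, by omega, ?_⟩
      rw [show b * (s0 / b) + b + y = b * (s0 / b + 1) + y from by ring,
        Nat.mul_add_mod, Nat.mod_eq_of_lt hy]
  -- now find the row
  have main : ∀ n, 0 < n → sf a b t 0 ≤ cc → cc ≤ sf a b t n →
      ∃ x, x < n ∧ sf a b t x ≤ cc ∧ cc ≤ sf a b t (x + 1) := by
    intro n
    induction n with
    | zero => omega
    | succ n ih =>
      intro _ h0 hn
      rcases Nat.eq_zero_or_pos n with rfl | hn0
      · exact ⟨0, by omega, h0, hn⟩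
      · by_cases hcc : cc ≤ sf a b t n
        · obtain ⟨x, hx1, hx2, hx3⟩ := ih hn0 h0 hcc
          exact ⟨x, by omega, hx2, hx3⟩
        · exact ⟨n, by omega, le_of_not_ge hcc, hn⟩
  obtain ⟨x, hx1, hx2, hx3⟩ := main a ha hc1 (by rw [sf_top b ha t]; omega)
  exact ⟨x, hx1, cc, hx2, hx3, hc3⟩

end


def SV (a q b : ℕ) : Set ((Fin a ⊕ Fin q) ⊕ Fin b) :=
  Sum.inl '' (Sum.inl '' Set.univ) ∪ Sum.inr '' Set.univ

theorem memS_left {a q b : ℕ} (x : Fin a) : (inl (inl x) : (Fin a ⊕ Fin q) ⊕ Fin b) ∈ SV a q b :=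
  Or.inl ⟨inl x, ⟨x, trivial, rfl⟩, rfl⟩

theorem memS_right {a q b : ℕ} (y : Fin b) : (inr y : (Fin a ⊕ Fin q) ⊕ Fin b) ∈ SV a q b :=
  Or.inr ⟨y, trivial, rfl⟩

theorem not_memS_u {a q b : ℕ} (u : Fin q) : (inl (inr u) : (Fin a ⊕ Fin q) ⊕ Fin b) ∉ SV a q b := by
  rintro (⟨z, ⟨x, -, rfl⟩, hz⟩ | ⟨y, -, hy⟩) <;> simp_all

def treeA (a q b t : ℕ) : (completeBipartiteGraph (Fin a ⊕ Fin q) (Fin b)).Subgraph where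
  verts := SV a q b
  Adj v w := ∃ (x : Fin a) (y : Fin b), cov a b t x (y : ℕ) ∧
    ((v = inl (inl x) ∧ w = inr y) ∨ (v = inr y ∧ w = inl (inl x)))
  adj_sub := by rintro v w ⟨x, y, -, (⟨rfl, rfl⟩ | ⟨rfl, rfl⟩)⟩ <;> simp
  edge_vert := by
    rintro v w ⟨x, y, -, (⟨rfl, rfl⟩ | ⟨rfl, rfl⟩)⟩
    exacts [memS_left x, memS_right y]
  symm := by
    refine ⟨?_⟩
    rintro v w ⟨x, y, hc, (⟨rfl, rfl⟩ | ⟨rfl, rfl⟩)⟩ <;> exact ⟨x, y, hc, by tauto⟩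

def treeB (a : ℕ) {q : ℕ} (b p : ℕ) (m : Fin q) :
    (completeBipartiteGraph (Fin a ⊕ Fin q) (Fin b)).Subgraph where
  verts := SV a q b ∪ {inl (inr m)}
  Adj v w :=
    (∃ y : Fin b, (v = inl (inr m) ∧ w = inr y) ∨ (v = inr y ∧ w = inl (inr m))) ∨
    (∃ (x : Fin a) (y : Fin b), (y : ℕ) = lcol a b p m x ∧
      ((v = inl (inl x) ∧ w = inr y) ∨ (v = inr y ∧ w = inl (inl x))))
  adj_sub := by
    rintro v w (⟨y, (⟨rfl, rfl⟩ | ⟨rfl, rfl⟩)⟩ | ⟨x, y, -, (⟨rfl, rfl⟩ | ⟨rfl, rfl⟩)⟩) <;> simp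
  edge_vert := by
    rintro v w (⟨y, (⟨rfl, rfl⟩ | ⟨rfl, rfl⟩)⟩ | ⟨x, y, -, (⟨rfl, rfl⟩ | ⟨rfl, rfl⟩)⟩)
    exacts [Or.inr rfl, Or.inl (memS_right y), Or.inl (memS_left x), Or.inl (memS_right y)]
  symm := by
    refine ⟨?_⟩
    rintro v w (⟨y, (⟨rfl, rfl⟩ | ⟨rfl, rfl⟩)⟩ | ⟨x, y, hc, (⟨rfl, rfl⟩ | ⟨rfl, rfl⟩)⟩)
    · exact Or.inl ⟨y, by tauto⟩
    · exact Or.inl ⟨y, by tauto⟩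
    · exact Or.inr ⟨x, y, hc, by tauto⟩
    · exact Or.inr ⟨x, y, hc, by tauto⟩

section
open SimpleGraph Sum Set

theorem isTree_of_parent {V : Type*} [Nonempty V] {G : SimpleGraph V} (f : V → V) (h : V → ℕ)
    (hedge : ∀ v w, G.Adj v w → (w = f v ∧ h w < h v) ∨ (v = f w ∧ h v < h w))
    (hpar : ∀ v, 0 < h v → G.Adj v (f v) ∧ h (f v) < h v)
    (hroot : ∀ v w, h v = 0 → h w = 0 → v = w) : G.IsTree := by
  have key : ∀ n (v : V), h v ≤ n → ∃ r, h r = 0 ∧ G.Reachable v r := by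
    intro n
    induction n with
    | zero => exact fun v hv => ⟨v, Nat.le_zero.mp hv, Reachable.refl v⟩
    | succ n ih =>
      intro v hv
      rcases Nat.eq_zero_or_pos (h v) with h0 | h0
      · exact ⟨v, h0, Reachable.refl v⟩
      · obtain ⟨hadj, hlt⟩ := hpar v h0
        obtain ⟨r, hr, hre⟩ := ih (f v) (by omega)
        exact ⟨r, hr, hadj.reachable.trans hre⟩
  constructor
  · refine ⟨fun v w => ?_⟩
    obtain ⟨r1, hr1, hv1⟩ := key (h v) v le_rfl
    obtain ⟨r2, hr2, hv2⟩ := key (h w) w le_rfl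
    rw [hroot r1 r2 hr1 hr2] at hv1
    exact hv1.trans hv2.symm
  · intro v0 c hc
    classical
    -- find a vertex of maximal height on the cycle
    have hsne : c.support.toFinset.Nonempty := by
      simp [List.toFinset_nonempty_iff]
    obtain ⟨u, hu_mem, hu_max⟩ := c.support.toFinset.exists_max_image h hsne
    rw [List.mem_toFinset] at hu_mem
    have hu_max' : ∀ z ∈ c.support, h z ≤ h u := fun z hz =>
      hu_max z (List.mem_toFinset.mpr hz)
    set c' := c.rotate u hu_mem with hc'def
    have hc' : c'.IsCycle := hc.rotate hu_mem
    have hmem' : ∀ z ∈ c'.support, h z ≤ h u := by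
      intro z hz
      rw [c'.support_eq_cons, List.mem_cons] at hz
      rcases hz with rfl | hz
      · exact le_rfl
      · exact hu_max' z (List.mem_of_mem_tail
          (((Walk.support_rotate c u hu_mem).mem_iff).mp hz))
    obtain ⟨x, ha1, r, hceq⟩ := Walk.not_nil_iff.mp hc'.not_nil
    rw [hceq] at hc'
    obtain ⟨hrpath, hnotmem⟩ := (Walk.cons_isCycle_iff r ha1).mp hc'
    -- the first neighbor
    have hx : x = f u := by
      rcases hedge u x ha1 with ⟨h1, _⟩ | ⟨_, h2⟩
      · exact h1
      · exact absurd h2 (by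
          have : x ∈ c'.support := by
            rw [hceq]; simp [Walk.support_cons]
          exact not_lt.mpr (hmem' x this))
    -- the last edge
    have hrnil : ¬ r.reverse.Nil := by
      rw [Walk.nil_iff_length_eq]
      have h3 := hc'.three_le_length
      rw [Walk.length_cons] at h3
      simp only [Walk.length_reverse]
      omega
    obtain ⟨y, ha2, r2, hre⟩ := Walk.not_nil_iff.mp hrnil
    have hy : y = f u := by
      rcases hedge u y ha2 with ⟨h1, _⟩ | ⟨_, h2⟩
      · exact h1
      · exact absurd h2 (by
          have hy1 : y ∈ r.support := by
            have : y ∈ r.reverse.support := by rw [hre]; simp [Walk.support_cons]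
            rwa [Walk.support_reverse, List.mem_reverse] at this
          have : y ∈ c'.support := by
            rw [hceq, Walk.support_cons]
            exact List.mem_cons_of_mem _ hy1
          exact not_lt.mpr (hmem' y this))
    have hedge2 : s(u, y) ∈ r.edges := by
      have : s(u, y) ∈ r.reverse.edges := by
        rw [hre]; simp
      rwa [Walk.edges_reverse, List.mem_reverse] at this
    rw [hy, ← hx] at hedge2
    exact hnotmem hedge2


def HA {a q b : ℕ} (mr : Fin b → Fin a) : ((Fin a ⊕ Fin q) ⊕ Fin b) → ℕ
  | inl (inl x) => 2 * (x : ℕ)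
  | inl (inr _) => 1
  | inr y => 2 * (mr y : ℕ) + 1

def FA {a q b : ℕ} (ha : 0 < a) (hb : 0 < b) (t : ℕ) (mr : Fin b → Fin a) :
    ((Fin a ⊕ Fin q) ⊕ Fin b) → ((Fin a ⊕ Fin q) ⊕ Fin b)
  | inl (inl x) => inr ⟨sf a b t x % b, Nat.mod_lt (sf a b t x) hb⟩
  | inl (inr _) => inl (inl ⟨0, ha⟩)
  | inr y => inl (inl (mr y))

theorem FA_mem {a q b : ℕ} (ha : 0 < a) (hb : 0 < b) (t : ℕ) (mr : Fin b → Fin a)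
    (v : (Fin a ⊕ Fin q) ⊕ Fin b) : FA ha hb t mr v ∈ SV a q b := by
  rcases v with (x | u) | y
  · exact memS_right _
  · exact memS_left _
  · exact memS_left _

theorem isTree_A {a q b : ℕ} (ha : 0 < a) (hb : 0 < b) (t : ℕ) (mr : Fin b → Fin a)
    (hmr1 : ∀ y : Fin b, cov a b t (mr y) (y : ℕ))
    (hmr2 : ∀ (y : Fin b) (x : ℕ), x < (mr y : ℕ) → ¬ (x < a ∧ cov a b t x (y : ℕ))) :
    (treeA a q b t).coe.IsTree := by
  haveI : Nonempty ↥(treeA a q b t).verts := ⟨⟨inl (inl ⟨0, ha⟩), memS_left _⟩⟩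
  apply isTree_of_parent (f := fun v => ⟨FA ha hb t mr v.1, FA_mem ha hb t mr v.1⟩)
    (h := fun v => HA mr v.1)
  · -- hedge
    rintro ⟨v, hv⟩ ⟨w, hw⟩ hadj
    obtain ⟨x, y, hcov, (⟨rfl, rfl⟩ | ⟨rfl, rfl⟩)⟩ := hadj
    · have hmrle : (mr y : ℕ) ≤ (x : ℕ) := by
        by_contra hlt
        exact hmr2 y x (by omega) ⟨x.2, hcov⟩
      rcases eq_or_lt_of_le hmrle with heq | hlt
      · refine Or.inr ⟨Subtype.ext ?_, ?_⟩
        · show inl (inl x) = FA ha hb t mr (inr y)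
          simp only [FA]
          rw [show mr y = x from Fin.ext heq]
        · show HA mr (inl (inl x)) < HA mr (inr y)
          simp only [HA]
          omega
      · refine Or.inl ⟨Subtype.ext ?_, ?_⟩
        · show (inr y : (Fin a ⊕ Fin q) ⊕ Fin b) = FA ha hb t mr (inl (inl x))
          simp only [FA]
          congr 1
          exact Fin.ext (cov_within ha hb x.2 hlt hcov (hmr1 y))
        · show HA mr (inr y) < HA mr (inl (inl x))
          simp only [HA]
          omega
    · have hmrle : (mr y : ℕ) ≤ (x : ℕ) := by
        by_contra hlt
        exact hmr2 y x (by omega) ⟨x.2, hcov⟩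
      rcases eq_or_lt_of_le hmrle with heq | hlt
      · refine Or.inl ⟨Subtype.ext ?_, ?_⟩
        · show inl (inl x) = FA ha hb t mr (inr y)
          simp only [FA]
          rw [show mr y = x from Fin.ext heq]
        · show HA mr (inl (inl x)) < HA mr (inr y)
          simp only [HA]
          omega
      · refine Or.inr ⟨Subtype.ext ?_, ?_⟩
        · show (inr y : (Fin a ⊕ Fin q) ⊕ Fin b) = FA ha hb t mr (inl (inl x))
          simp only [FA]
          congr 1
          exact Fin.ext (cov_within ha hb x.2 hlt hcov (hmr1 y))
        · show HA mr (inr y) < HA mr (inl (inl x))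
          simp only [HA]
          omega
  · -- hpar
    rintro ⟨(x | u) | y, hmem⟩ hpos
    · have hx : 0 < (x : ℕ) := by
        simp only [HA] at hpos
        omega
      constructor
      · show (treeA a q b t).Adj (inl (inl x)) (inr ⟨sf a b t x % b, Nat.mod_lt (sf a b t x) hb⟩)
        exact ⟨x, ⟨sf a b t x % b, Nat.mod_lt (sf a b t x) hb⟩,
          ⟨sf a b t x, le_rfl, sf_mono a b t (by omega), rfl⟩, Or.inl ⟨rfl, rfl⟩⟩
      · show HA mr (inr ⟨sf a b t x % b, Nat.mod_lt (sf a b t x) hb⟩) < HA mr (inl (inl x))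
        simp only [HA]
        have hcv : cov a b t ((x : ℕ) - 1) (sf a b t x % b) := by
          refine ⟨sf a b t x, sf_mono a b t (by omega), ?_, rfl⟩
          rw [show (x : ℕ) - 1 + 1 = (x : ℕ) from by omega]
        have : (mr ⟨sf a b t x % b, Nat.mod_lt (sf a b t x) hb⟩ : ℕ) ≤ (x : ℕ) - 1 := by
          by_contra hlt
          exact hmr2 ⟨sf a b t x % b, Nat.mod_lt (sf a b t x) hb⟩ ((x : ℕ) - 1)
            (by omega) ⟨by omega, hcv⟩
        omega
    · exact absurd hmem (not_memS_u u)
    · constructor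
      · show (treeA a q b t).Adj (inr y) (inl (inl (mr y)))
        exact ⟨mr y, y, hmr1 y, Or.inr ⟨rfl, rfl⟩⟩
      · show HA mr (inl (inl (mr y))) < HA mr (inr y)
        simp only [HA]
        omega
  · -- hroot
    rintro ⟨(x | u) | y, hmv⟩ ⟨(x' | u') | y', hmw⟩ hv hw <;>
      simp only [HA] at hv hw
    · have hxx : x = x' := Fin.ext (by omega)
      subst hxx
      exact Subtype.ext rfl
    all_goals omega

def HB {a q b : ℕ} (m : Fin q) : ((Fin a ⊕ Fin q) ⊕ Fin b) → ℕ
  | inl (inl _) => 2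
  | inl (inr u) => if u = m then 0 else 3
  | inr _ => 1

theorem HB_self {a q b : ℕ} (m : Fin q) :
    HB (a := a) (b := b) m (inl (inr m)) = 0 := by
  show (if m = m then 0 else 3) = 0
  rw [if_pos rfl]

theorem HB_other {a q b : ℕ} {m u : Fin q} (hne : u ≠ m) :
    HB (a := a) (b := b) m (inl (inr u)) = 3 := by
  show (if u = m then 0 else 3) = 3
  rw [if_neg hne]

def FB {a q : ℕ} (b : ℕ) (hb : 0 < b) (p : ℕ) (m : Fin q) :
    ((Fin a ⊕ Fin q) ⊕ Fin b) → ((Fin a ⊕ Fin q) ⊕ Fin b)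
  | inl (inl x) => inr ⟨lcol a b p m x, Nat.mod_lt (cf a b (x + p) + p + (m:ℕ)) hb⟩
  | inl (inr _) => inl (inr m)
  | inr _ => inl (inr m)

theorem FB_mem {a q b p : ℕ} (hb : 0 < b) (m : Fin q)
    (v : (Fin a ⊕ Fin q) ⊕ Fin b) : FB b hb p m v ∈ (treeB a b p m).verts := by
  rcases v with (x | u) | y
  · exact Or.inl (memS_right _)
  · exact Or.inr rfl
  · exact Or.inr rfl

theorem isTree_B {a q b p : ℕ} (hb : 0 < b) (m : Fin q) :
    (treeB a b p m).coe.IsTree := by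
  haveI : Nonempty ↥(treeB a b p m).verts := ⟨⟨inl (inr m), Or.inr rfl⟩⟩
  apply isTree_of_parent (f := fun v => ⟨FB b hb p m v.1, FB_mem hb m v.1⟩)
    (h := fun v => HB m v.1)
  · -- hedge
    rintro ⟨v, hv⟩ ⟨w, hw⟩ hadj
    obtain (⟨y, (⟨rfl, rfl⟩ | ⟨rfl, rfl⟩)⟩ | ⟨x, y, hy, (⟨rfl, rfl⟩ | ⟨rfl, rfl⟩)⟩) := hadj
    · refine Or.inr ⟨Subtype.ext rfl, ?_⟩
      show HB m (inl (inr m)) < HB m (inr y)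
      rw [HB_self]
      exact Nat.zero_lt_one
    · refine Or.inl ⟨Subtype.ext rfl, ?_⟩
      show HB m (inl (inr m)) < HB m (inr y)
      rw [HB_self]
      exact Nat.zero_lt_one
    · refine Or.inl ⟨Subtype.ext ?_, ?_⟩
      · show (inr y : (Fin a ⊕ Fin q) ⊕ Fin b) = FB b hb p m (inl (inl x))
        simp only [FB]
        congr 1
        exact Fin.ext hy
      · show HB m (inr y) < HB m (inl (inl x))
        exact Nat.one_lt_two
    · refine Or.inr ⟨Subtype.ext ?_, ?_⟩
      · show (inr y : (Fin a ⊕ Fin q) ⊕ Fin b) = FB b hb p m (inl (inl x))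
        simp only [FB]
        congr 1
        exact Fin.ext hy
      · show HB m (inr y) < HB m (inl (inl x))
        exact Nat.one_lt_two
  · -- hpar
    rintro ⟨(x | u) | y, hmem⟩ hpos
    · constructor
      · show (treeB a b p m).Adj (inl (inl x)) (inr ⟨lcol a b p m x, Nat.mod_lt (cf a b (x + p) + p + (m:ℕ)) hb⟩)
        exact Or.inr ⟨x, ⟨lcol a b p m x, Nat.mod_lt (cf a b (x + p) + p + (m:ℕ)) hb⟩, rfl, Or.inl ⟨rfl, rfl⟩⟩
      · show HB m (inr ⟨lcol a b p m x, Nat.mod_lt (cf a b (x + p) + p + (m:ℕ)) hb⟩) < HB m (inl (inl x))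
        exact Nat.one_lt_two
    · have hum : u = m := by
        by_contra hne
        rcases hmem with hmem | hmem
        · exact absurd hmem (not_memS_u u)
        · exact hne (by simpa using hmem)
      have hpos2 : 0 < HB (a := a) (b := b) m (inl (inr u)) := hpos
      rw [hum] at hpos2
      have hz := HB_self (a := a) (b := b) m
      omega
    · constructor
      · show (treeB a b p m).Adj (inr y) (inl (inr m))
        exact Or.inl ⟨y, Or.inr ⟨rfl, rfl⟩⟩
      · show HB m (inl (inr m)) < HB m (inr y)
        rw [HB_self]
        exact Nat.zero_lt_one
  · -- hroot
    rintro ⟨(x | u) | y, hmv⟩ ⟨(x' | u') | y', hmw⟩ hv hw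
    · exact absurd hv (show (2:ℕ) ≠ 0 by omega)
    · exact absurd hv (show (2:ℕ) ≠ 0 by omega)
    · exact absurd hv (show (2:ℕ) ≠ 0 by omega)
    · exact absurd hw (show (2:ℕ) ≠ 0 by omega)
    · have h1 : u = m := by
        by_contra hne
        have h3 : (3:ℕ) = 0 := by rw [← HB_other (a := a) (b := b) hne]; exact hv
        omega
      have h2 : u' = m := by
        by_contra hne
        have h3 : (3:ℕ) = 0 := by rw [← HB_other (a := a) (b := b) hne]; exact hw
        omega
      subst h1
      subst h2
      exact Subtype.ext rfl
    · exact absurd hw (show (1:ℕ) ≠ 0 by omega)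
    · exact absurd hv (show (1:ℕ) ≠ 0 by omega)
    · exact absurd hv (show (1:ℕ) ≠ 0 by omega)
    · exact absurd hv (show (1:ℕ) ≠ 0 by omega)

end

section
open SimpleGraph Sum Set

theorem edisj_AA {a b p q : ℕ} (ha : 0 < a) (hb : 0 < b)
    (hcnt : p * (a + b - 1) + q * a ≤ a * b) {t t' : ℕ} (hne : t ≠ t')
    (ht : t < p) (ht' : t' < p) :
    (treeA a q b t).edgeSet ∩ (treeA a q b t').edgeSet = ∅ := by
  rw [Set.eq_empty_iff_forall_notMem]
  intro e he
  induction e using Sym2.ind with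
  | _ v w =>
    obtain ⟨h1, h2⟩ := he
    rw [Subgraph.mem_edgeSet] at h1 h2
    obtain ⟨x, y, hc, hvw⟩ := h1
    obtain ⟨x', y', hc', hvw'⟩ := h2
    have hxy : (x' : ℕ) = x ∧ (y' : ℕ) = y := by
      rcases hvw with ⟨rfl, rfl⟩ | ⟨rfl, rfl⟩ <;> rcases hvw' with ⟨h3, h4⟩ | ⟨h3, h4⟩ <;>
        simp_all
    obtain ⟨hx, hy⟩ := hxy
    rw [hx, hy] at hc'
    rcases lt_or_gt_of_ne hne with h | h
    · exact disjAA ha hb hcnt h ht' hc hc'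
    · exact disjAA ha hb hcnt h ht hc' hc

theorem edisj_AB {a b p q : ℕ} (ha : 0 < a) (hb : 0 < b)
    (hcnt : p * (a + b - 1) + q * a ≤ a * b) {t : ℕ} (ht : t < p) (m : Fin q) :
    (treeA a q b t).edgeSet ∩ (treeB a b p m).edgeSet = ∅ := by
  rw [Set.eq_empty_iff_forall_notMem]
  intro e he
  induction e using Sym2.ind with
  | _ v w =>
    obtain ⟨h1, h2⟩ := he
    rw [Subgraph.mem_edgeSet] at h1 h2
    obtain ⟨x, y, hc, hvw⟩ := h1
    rcases h2 with ⟨y', hst⟩ | ⟨x', y', hy', hvw'⟩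
    · rcases hvw with ⟨rfl, rfl⟩ | ⟨rfl, rfl⟩ <;> rcases hst with ⟨h3, h4⟩ | ⟨h3, h4⟩ <;>
        simp_all
    · have hxy : (x' : ℕ) = x ∧ (y' : ℕ) = y := by
        rcases hvw with ⟨rfl, rfl⟩ | ⟨rfl, rfl⟩ <;> rcases hvw' with ⟨h3, h4⟩ | ⟨h3, h4⟩ <;>
          simp_all
      obtain ⟨hx, hy⟩ := hxy
      rw [hx, hy] at hy'
      exact disjAB ha hb hcnt ht m.2 hc hy'

theorem edisj_BB {a b p q : ℕ} (ha : 0 < a) (hb : 0 < b)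
    (hcnt : p * (a + b - 1) + q * a ≤ a * b) {m m' : Fin q} (hne : m ≠ m') :
    (treeB a b p m).edgeSet ∩ (treeB a b p m').edgeSet = ∅ := by
  rw [Set.eq_empty_iff_forall_notMem]
  intro e he
  induction e using Sym2.ind with
  | _ v w =>
    obtain ⟨h1, h2⟩ := he
    rw [Subgraph.mem_edgeSet] at h1 h2
    rcases h1 with ⟨y, hst⟩ | ⟨x, y, hy, hvw⟩
    · rcases h2 with ⟨y', hst'⟩ | ⟨x', y', hy', hvw'⟩
      · rcases hst with ⟨rfl, rfl⟩ | ⟨rfl, rfl⟩ <;> rcases hst' with ⟨h3, h4⟩ | ⟨h3, h4⟩ <;>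
          simp_all [Fin.ext_iff]
      · rcases hst with ⟨rfl, rfl⟩ | ⟨rfl, rfl⟩ <;> rcases hvw' with ⟨h3, h4⟩ | ⟨h3, h4⟩ <;>
          simp_all
    · rcases h2 with ⟨y', hst'⟩ | ⟨x', y', hy', hvw'⟩
      · rcases hvw with ⟨rfl, rfl⟩ | ⟨rfl, rfl⟩ <;> rcases hst' with ⟨h3, h4⟩ | ⟨h3, h4⟩ <;>
          simp_all
      · have hxy : (x' : ℕ) = x ∧ (y' : ℕ) = y := by
          rcases hvw with ⟨rfl, rfl⟩ | ⟨rfl, rfl⟩ <;> rcases hvw' with ⟨h3, h4⟩ | ⟨h3, h4⟩ <;>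
            simp_all
        obtain ⟨hx, hy2⟩ := hxy
        rw [hx, hy2] at hy'
        exact disjBB ha hb hcnt (fun h => hne (Fin.ext h)) m.2 m'.2 (by rw [← hy, ← hy'])

end

end SG13


open SimpleGraph Sum Set SG13

theorem stmt_13 (i k p q : ℕ) (hi1 : 1 ≤ i) (hik : i ≤ k - 1)
    (hcount : p * (k - 1) + q * i ≤ i * (k - i)) :
    -- vertices: left part is `S ∩ X` (of size `i`) together with the `q` extra
    -- vertices `u_1, …, u_q`; right part is `S ∩ Y` (of size `k - i`).
    ∃ T : Fin (p + q) → (completeBipartiteGraph (Fin i ⊕ Fin q) (Fin (k - i))).Subgraph,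
      (∀ n, (T n).coe.IsTree) ∧
      (∀ m n, m ≠ n → (T m).edgeSet ∩ (T n).edgeSet = ∅) ∧
      -- the first `p` trees are spanning trees of `K_{i,k-i}` on `S`
      (∀ n : Fin (p + q), (n : ℕ) < p →
        (T n).verts = Sum.inl '' (Sum.inl '' Set.univ) ∪ Sum.inr '' Set.univ) ∧
      -- the remaining `q` trees: the `m`-th has vertex set `S ∪ {u_m}`, with `u_m`
      -- adjacent to every vertex of `S ∩ Y` and every vertex of `S ∩ X` a leaf
      (∀ m : Fin q, ∀ n : Fin (p + q), (n : ℕ) = p + (m : ℕ) →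
        (T n).verts =
          (Sum.inl '' (Sum.inl '' Set.univ) ∪ Sum.inr '' Set.univ) ∪
            {Sum.inl (Sum.inr m)} ∧
        (∀ y : Fin (k - i), (T n).Adj (Sum.inl (Sum.inr m)) (Sum.inr y)) ∧
        (∀ x : Fin i, ∃! w, (T n).Adj (Sum.inl (Sum.inl x)) w)) := by
  classical
  have ha : 0 < i := hi1
  have hb : 0 < k - i := by omega
  have hcnt : p * (i + (k - i) - 1) + q * i ≤ i * (k - i) := by
    rw [show i + (k - i) - 1 = k - 1 from by omega]
    exact hcount
  have hex : ∀ (t : ℕ) (y : Fin (k - i)), ∃ x : ℕ,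
      (x < i ∧ cov i (k - i) t x (y : ℕ)) ∧
      ∀ x', x' < x → ¬ (x' < i ∧ cov i (k - i) t x' (y : ℕ)) := by
    intro t y
    exact ⟨Nat.find (cov_total ha hb t y.2), Nat.find_spec (cov_total ha hb t y.2),
      fun x' hx' => Nat.find_min (cov_total ha hb t y.2) hx'⟩
  choose mrow hmrow1 hmrow2 using hex
  refine ⟨fun n => if h : (n : ℕ) < p then treeA i q (k - i) n
    else treeB i (k - i) p ⟨(n : ℕ) - p, by have h2 := n.2; omega⟩, ?_, ?_, ?_, ?_⟩
  · intro n
    by_cases hn : (n : ℕ) < p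
    · beta_reduce
      rw [dif_pos hn]
      exact isTree_A ha hb n (fun y => ⟨mrow n y, (hmrow1 n y).1⟩)
        (fun y => (hmrow1 n y).2) (fun y x hx => hmrow2 n y x hx)
    · beta_reduce
      rw [dif_neg hn]
      exact isTree_B hb _
  · intro m n hmn
    by_cases hm : (m : ℕ) < p <;> by_cases hn : (n : ℕ) < p
    · beta_reduce
      rw [dif_pos hm, dif_pos hn]
      exact edisj_AA ha hb hcnt (fun h => hmn (Fin.ext h)) hm hn
    · beta_reduce
      rw [dif_pos hm, dif_neg hn]
      exact edisj_AB ha hb hcnt hm _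
    · beta_reduce
      rw [dif_neg hm, dif_pos hn]
      rw [Set.inter_comm]
      exact edisj_AB ha hb hcnt hn _
    · beta_reduce
      rw [dif_neg hm, dif_neg hn]
      refine edisj_BB ha hb hcnt ?_
      intro h
      apply hmn
      apply Fin.ext
      have h2 := congrArg Fin.val h
      simp only at h2
      omega
  · intro n hn
    beta_reduce
    rw [dif_pos hn]
    rfl
  · intro m n hnm
    have hnp : ¬ (n : ℕ) < p := by omega
    beta_reduce
    rw [dif_neg hnp]
    have hfin : (n : ℕ) - p = (m : ℕ) := by omega
    simp only [hfin, Fin.eta]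
    refine ⟨rfl, fun y => Or.inl ⟨y, Or.inl ⟨rfl, rfl⟩⟩, fun x => ?_⟩
    refine ⟨inr ⟨lcol i (k - i) p m x, Nat.mod_lt _ hb⟩,
      Or.inr ⟨x, ⟨lcol i (k - i) p m x, Nat.mod_lt _ hb⟩, rfl, Or.inl ⟨rfl, rfl⟩⟩, ?_⟩
    rintro w' (⟨y, (⟨h3, h4⟩ | ⟨h3, h4⟩)⟩ | ⟨x', y', hy', (⟨h3, h4⟩ | ⟨h3, h4⟩)⟩)
    · simp at h3
    · simp at h3
    · have hx : x' = x := by simpa [eq_comm] using h3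
      subst hx
      rw [h4]
      congr 1
      exact Fin.ext hy'
    · simp at h3
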